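/- Let 0 < p ≤ 1, w ∈ A_∞, q = 2(q_w + 1) where q_w is the critical A_p index of w, and ℓ ≥ s ≥ [n(q_w/p - 1)]. Then every w-(p,q,ℓ)-atom f is a constant multiple of a classical (unweighted) (p,2,ℓ)-atom; specifically, g := C^{-1/q} |B|^{-1/p} w(B)^{1/p} f is a classical (p,2,ℓ)-atom, where C is the constant in the A_{q/2} characterization of w. -/

import Mathlib

open MeasureTheory Metric Finset

noncomputable def setAvg {n : ℕ} (w : EuclideanSpace ℝ (Fin n) → ℝ)
    (B : Set (EuclideanSpace ℝ (Fin n))) : ℝ :=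
  (volume B).toReal⁻¹ * ∫ x in B, w x

def IsAp (n : ℕ) (w : EuclideanSpace ℝ (Fin n) → ℝ) (p C : ℝ) : Prop :=
  (p = 1 → ∀ (x₀ : EuclideanSpace ℝ (Fin n)) (r : ℝ), 0 < r →
    setAvg w (ball x₀ r) ≤ C * essInf w (volume.restrict (ball x₀ r))) ∧
  (1 < p → ∀ (x₀ : EuclideanSpace ℝ (Fin n)) (r : ℝ), 0 < r →
    setAvg w (ball x₀ r) *
      (setAvg (fun x => w x ^ (-1 / (p - 1))) (ball x₀ r)) ^ (p - 1) ≤ C)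

/-- A `w`-`(p,q,ℓ)`-atom supported in the ball `B(x₀,σ)`. -/
def IsWAtom (n : ℕ) (w : EuclideanSpace ℝ (Fin n) → ℝ) (p q : ℝ) (ℓ : ℕ)
    (f : EuclideanSpace ℝ (Fin n) → ℝ) (x₀ : EuclideanSpace ℝ (Fin n)) (σ : ℝ) : Prop :=
  0 < σ ∧ (∀ x ∉ ball x₀ σ, f x = 0) ∧
  Integrable (fun x => |f x| ^ q * w x) volume ∧
  (∫ x, |f x| ^ q * w x) ^ (1 / q) ≤ (∫ x in ball x₀ σ, w x) ^ (1 / q - 1 / p) ∧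
  (∀ α : Fin n → ℕ, (∑ i, α i) ≤ ℓ →
    Integrable (fun x => f x * ∏ i, (x i) ^ (α i)) volume ∧
    ∫ x, f x * ∏ i, (x i) ^ (α i) = 0)

/-- A classical (unweighted) `(p,2,ℓ)`-atom supported in the ball `B(x₀,σ)`. -/
def IsClassicalAtom2 (n : ℕ) (p : ℝ) (ℓ : ℕ)
    (g : EuclideanSpace ℝ (Fin n) → ℝ) (x₀ : EuclideanSpace ℝ (Fin n)) (σ : ℝ) : Prop :=
  0 < σ ∧ (∀ x ∉ ball x₀ σ, g x = 0) ∧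
  MemLp g 2 volume ∧
  (∫ x, |g x| ^ (2:ℝ)) ^ ((1:ℝ) / 2) ≤ (volume (ball x₀ σ)).toReal ^ (1 / 2 - 1 / p) ∧
  (∀ α : Fin n → ℕ, (∑ i, α i) ≤ ℓ →
    Integrable (fun x => g x * ∏ i, (x i) ^ (α i)) volume ∧
    ∫ x, g x * ∏ i, (x i) ^ (α i) = 0)

theorem watom_multiple_of_classical_L2_atom (n : ℕ) (hn : 0 < n)
    (w : EuclideanSpace ℝ (Fin n) → ℝ) (hw : ∀ x, 0 ≤ w x)
    (hloc : LocallyIntegrable w volume)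
    -- `w ∈ A_∞`:
    (hAinf : ∃ t : ℝ, 1 ≤ t ∧ ∃ Ct > (0:ℝ), IsAp n w t Ct)
    (p : ℝ) (hp0 : 0 < p) (hp1 : p ≤ 1)
    -- the critical index `q_w` of `w`:
    (qw : ℝ) (hqw : qw = sInf {t : ℝ | 1 ≤ t ∧ ∃ Ct > (0:ℝ), IsAp n w t Ct})
    (q : ℝ) (hq : q = 2 * (qw + 1))
    (s ℓ : ℕ) (hsl : s ≤ ℓ) (hs : ⌊(n : ℝ) * (qw / p - 1)⌋ ≤ (s : ℤ))
    -- the constant `C` in the `A_{q/2}` characterization of `w` (Lemma A):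
    (C : ℝ) (hC : 0 < C)
    (hchar : ∀ g : EuclideanSpace ℝ (Fin n) → ℝ, Measurable g → (∀ x, 0 ≤ g x) →
      ∀ (y₀ : EuclideanSpace ℝ (Fin n)) (r : ℝ), 0 < r →
        (setAvg g (ball y₀ r)) ^ (q / 2) ≤
          C * (∫ x in ball y₀ r, w x)⁻¹ * ∫ x in ball y₀ r, g x ^ (q / 2) * w x) :
    ∀ (f : EuclideanSpace ℝ (Fin n) → ℝ) (x₀ : EuclideanSpace ℝ (Fin n)) (σ : ℝ),
      IsWAtom n w p q ℓ f x₀ σ →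
      IsClassicalAtom2 n p ℓ
        (fun x => C ^ (-(1 / q)) * (volume (ball x₀ σ)).toReal ^ (-(1 / p)) *
          (∫ y in ball x₀ σ, w y) ^ (1 / p) * f x) x₀ σ := by

  intro f x₀ σ hf
  obtain ⟨hσ, hsupp, hint, hsize, hmom⟩ := hf
  have hBmeas : MeasurableSet (ball x₀ σ) := measurableSet_ball
  set B : Set (EuclideanSpace ℝ (Fin n)) := ball x₀ σ with hB
  have hvolpos : 0 < (volume B).toReal :=
    ENNReal.toReal_pos (measure_ball_pos volume x₀ hσ).ne' measure_ball_lt_top.ne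
  set V : ℝ := (volume B).toReal with hV
  set W : ℝ := ∫ y in B, w y with hW
  have hW0 : 0 ≤ W := integral_nonneg fun x => hw x
  have hqw1 : 1 ≤ qw := by
    rw [hqw]
    obtain ⟨t, ht1, hts⟩ := hAinf
    exact le_csInf ⟨t, ht1, hts⟩ fun b hb => hb.1
  have hq4 : (4:ℝ) ≤ q := by rw [hq]; linarith
  have hqpos : 0 < q := by linarith
  have hpne : p ≠ 0 := hp0.ne'
  set c : ℝ := C ^ (-(1 / q)) * V ^ (-(1 / p)) * W ^ (1 / p) with hc
  -- trivial components
  have hsupp' : ∀ x ∉ B, c * f x = 0 := fun x hx => by rw [hsupp x hx, mul_zero]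
  have hmom' : ∀ α : Fin n → ℕ, (∑ i, α i) ≤ ℓ →
      Integrable (fun x => c * f x * ∏ i, (x i) ^ (α i)) volume ∧
      ∫ x, c * f x * ∏ i, (x i) ^ (α i) = 0 := by
    intro α hα
    obtain ⟨hi, he⟩ := hmom α hα
    constructor
    · simpa [mul_assoc] using hi.const_mul c
    · simp_rw [mul_assoc]
      rw [integral_const_mul, he, mul_zero]
  rcases eq_or_lt_of_le hW0 with hWz | hWpos
  · -- degenerate case `W = 0`: the function is identically zero
    have hWp0 : W ^ (1 / p) = 0 := by
      rw [← hWz, Real.zero_rpow (by positivity)]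
    have hc0 : c = 0 := by rw [hc, hWp0, mul_zero]
    refine ⟨hσ, hsupp', ?_, ?_, hmom'⟩
    · simp only [hc0, zero_mul]
      exact MeasureTheory.MemLp.zero
    · simp only [hc0, zero_mul, abs_zero]
      rw [Real.zero_rpow (by norm_num : (2:ℝ) ≠ 0)]
      rw [integral_zero, Real.zero_rpow (by norm_num : (1:ℝ)/2 ≠ 0)]
      exact Real.rpow_nonneg hvolpos.le _
  -- main case `0 < W`
  have hfint : Integrable f volume := by
    simpa using (hmom (fun _ => 0) (by simp)).1
  have hfm : AEMeasurable f volume := hfint.aemeasurable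
  set φ : EuclideanSpace ℝ (Fin n) → ℝ := hfm.mk f with hφ
  have hφmeas : Measurable φ := hfm.measurable_mk
  have hfφ : f =ᵐ[volume] φ := hfm.ae_eq_mk
  set I : ℝ := ∫ x, |f x| ^ q * w x with hI
  have hI0 : 0 ≤ I :=
    integral_nonneg fun x => mul_nonneg (Real.rpow_nonneg (abs_nonneg _) _) (hw x)
  have hIW : I ≤ W ^ (1 - q / p) := by
    have h1 : I = (I ^ (1 / q)) ^ q := by
      rw [← Real.rpow_mul hI0, one_div_mul_cancel hqpos.ne', Real.rpow_one]
    have h2 : (W ^ (1 / q - 1 / p)) ^ q = W ^ (1 - q / p) := by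
      rw [← Real.rpow_mul hW0]
      congr 1
      field_simp
    calc I = (I ^ (1 / q)) ^ q := h1
      _ ≤ (W ^ (1 / q - 1 / p)) ^ q :=
          Real.rpow_le_rpow (Real.rpow_nonneg hI0 _) hsize hqpos.le
      _ = W ^ (1 - q / p) := h2
  have hK0 : 0 ≤ C * W⁻¹ * I := by positivity
  set K2 : ℝ := (C * W⁻¹ * I) ^ (2 / q) with hK2
  have hK20 : 0 ≤ K2 := Real.rpow_nonneg hK0 _
  -- uniform bound on truncations
  have key : ∀ N : ℕ, ∫ x in B, min (φ x ^ 2) (N : ℝ) ≤ V * K2 := by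
    intro N
    set h : EuclideanSpace ℝ (Fin n) → ℝ := fun x => min (φ x ^ 2) (N : ℝ) with hh
    have hhm : Measurable h := by
      apply Measurable.min _ measurable_const
      fun_prop
    have hh0 : ∀ x, 0 ≤ h x := fun x => le_min (sq_nonneg _) (N.cast_nonneg)
    have hptw : ∀ᵐ x ∂(volume.restrict B), h x ^ (q / 2) * w x ≤ |f x| ^ q * w x := by
      filter_upwards [ae_restrict_of_ae hfφ] with x hx
      rw [hx]
      refine mul_le_mul_of_nonneg_right ?_ (hw x)
      have hle : h x ≤ |φ x| ^ (2:ℕ) := by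
        rw [sq_abs]
        exact min_le_left _ _
      calc h x ^ (q / 2) ≤ (|φ x| ^ (2:ℕ)) ^ (q / 2) :=
            Real.rpow_le_rpow (hh0 x) hle (by positivity)
        _ = |φ x| ^ q := by
            rw [← Real.rpow_natCast |φ x| 2, ← Real.rpow_mul (abs_nonneg _)]
            congr 1
            push_cast
            ring
    have hwfint : IntegrableOn (fun x => |f x| ^ q * w x) B volume := hint.integrableOn
    have hhqint : IntegrableOn (fun x => h x ^ (q / 2) * w x) B volume := by
      refine Integrable.mono' hwfint ?_ ?_
      · exact ((by fun_prop : Measurable fun x => h x ^ (q / 2)).aestronglyMeasurable.restrict.mul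
          hloc.aestronglyMeasurable.restrict)
      · filter_upwards [hptw] with x hx
        rw [Real.norm_eq_abs,
          abs_of_nonneg (mul_nonneg (Real.rpow_nonneg (hh0 x) _) (hw x))]
        exact hx
    have hIB : ∫ x in B, h x ^ (q / 2) * w x ≤ I := by
      calc ∫ x in B, h x ^ (q / 2) * w x ≤ ∫ x in B, |f x| ^ q * w x :=
            integral_mono_ae hhqint hwfint hptw
        _ ≤ I := setIntegral_le_integral hint
            (Filter.Eventually.of_forall fun x =>
              mul_nonneg (Real.rpow_nonneg (abs_nonneg _) _) (hw x))
    have hcharh := hchar h hhm hh0 x₀ σ hσ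
    rw [← hB, ← hW] at hcharh
    have havg0 : 0 ≤ setAvg h B :=
      mul_nonneg (inv_nonneg.2 ENNReal.toReal_nonneg) (integral_nonneg fun x => hh0 x)
    have h3 : setAvg h B ^ (q / 2) ≤ C * W⁻¹ * I := by
      refine hcharh.trans ?_
      have h0 : (0:ℝ) ≤ C * W⁻¹ := by positivity
      exact mul_le_mul_of_nonneg_left hIB h0
    have h4 : setAvg h B ≤ K2 := by
      calc setAvg h B = (setAvg h B ^ (q / 2)) ^ (2 / q) := by
            rw [← Real.rpow_mul havg0,
              show q / 2 * (2 / q) = 1 by field_simp, Real.rpow_one]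
        _ ≤ K2 := Real.rpow_le_rpow (Real.rpow_nonneg havg0 _) h3 (by positivity)
    have havg : ∫ x in B, h x = V * setAvg h B := by
      rw [setAvg, ← hV, ← mul_assoc, mul_inv_cancel₀ hvolpos.ne', one_mul]
    have hfin : ∫ x in B, h x ≤ V * K2 := by
      rw [havg]
      exact mul_le_mul_of_nonneg_left h4 hvolpos.le
    exact hfin
  -- monotone convergence
  have hlim : ∫⁻ x in B, ENNReal.ofReal (φ x ^ 2) ≤ ENNReal.ofReal (V * K2) := by
    have hmct : ∫⁻ x in B, ENNReal.ofReal (φ x ^ 2)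
        = ⨆ N : ℕ, ∫⁻ x in B, ENNReal.ofReal (min (φ x ^ 2) (N : ℝ)) := by
      rw [← lintegral_iSup]
      · apply lintegral_congr
        intro x
        apply le_antisymm
        · obtain ⟨N, hN⟩ := exists_nat_ge (φ x ^ 2)
          refine le_iSup_of_le N ?_
          rw [min_eq_left hN]
        · exact iSup_le fun N => ENNReal.ofReal_le_ofReal (min_le_left _ _)
      · intro N
        apply Measurable.ennreal_ofReal
        apply Measurable.min _ measurable_const
        fun_prop
      · intro N M hNM x
        exact ENNReal.ofReal_le_ofReal (min_le_min le_rfl (Nat.cast_le.2 hNM))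
    rw [hmct]
    refine iSup_le fun N => ?_
    have hintN : IntegrableOn (fun x => min (φ x ^ 2) (N : ℝ)) B volume := by
      refine Integrable.mono'
        ((integrableOn_const measure_ball_lt_top.ne :
          IntegrableOn (fun _ => (N:ℝ)) B volume)) ?_ ?_
      · refine AEStronglyMeasurable.restrict ?_
        apply Measurable.aestronglyMeasurable
        apply Measurable.min _ measurable_const
        fun_prop
      · filter_upwards with x
        rw [Real.norm_eq_abs,
          abs_of_nonneg (le_min (sq_nonneg _) (N.cast_nonneg))]
        exact min_le_right _ _
    rw [← ofReal_integral_eq_lintegral_ofReal hintN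
      (Filter.Eventually.of_forall fun x => le_min (sq_nonneg _) (N.cast_nonneg))]
    exact ENNReal.ofReal_le_ofReal (key N)
  have hVK0 : 0 ≤ V * K2 := mul_nonneg hvolpos.le hK20
  have hφ2int : IntegrableOn (fun x => φ x ^ 2) B volume := by
    refine ⟨((hφmeas.pow_const 2).aestronglyMeasurable).restrict, ?_⟩
    rw [hasFiniteIntegral_iff_ofReal (Filter.Eventually.of_forall fun x => sq_nonneg _)]
    exact lt_of_le_of_lt hlim ENNReal.ofReal_lt_top
  have hφ2val : ∫ x in B, φ x ^ 2 ≤ V * K2 := by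
    rw [integral_eq_lintegral_of_nonneg_ae
      (Filter.Eventually.of_forall fun x => sq_nonneg _) hφ2int.aestronglyMeasurable]
    exact ENNReal.toReal_le_of_le_ofReal hVK0 hlim
  have hfφ2 : (fun x => f x ^ 2) =ᵐ[volume] fun x => φ x ^ 2 :=
    hfφ.mono fun x hx => by simp only [hx]
  have hf2B : IntegrableOn (fun x => f x ^ 2) B volume :=
    hφ2int.congr (ae_restrict_of_ae hfφ2.symm)
  have hindeq : B.indicator (fun x => f x ^ 2) = fun x => f x ^ 2 := by
    funext x
    by_cases hx : x ∈ B
    · rw [Set.indicator_of_mem hx]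
    · rw [Set.indicator_of_notMem hx, hsupp x hx]
      ring
  have hf2 : Integrable (fun x => f x ^ 2) volume := by
    rw [← hindeq]
    exact (integrable_indicator_iff hBmeas).2 hf2B
  have hf2val : ∫ x, f x ^ 2 ≤ V * K2 := by
    rw [← hindeq, integral_indicator hBmeas]
    calc ∫ x in B, f x ^ 2 = ∫ x in B, φ x ^ 2 :=
          integral_congr_ae (ae_restrict_of_ae hfφ2)
      _ ≤ V * K2 := hφ2val
  -- the key quantitative estimate
  have h6 : K2 ≤ C ^ (2 / q) * W ^ (-(2 / p)) := by
    have hWI : W⁻¹ * I ≤ W ^ (-(q / p)) := by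
      have : W⁻¹ * I ≤ W⁻¹ * W ^ (1 - q / p) :=
        mul_le_mul_of_nonneg_left hIW (inv_nonneg.2 hW0)
      refine this.trans_eq ?_
      rw [← Real.rpow_neg_one W, ← Real.rpow_add hWpos]
      congr 1
      ring
    have hK : C * W⁻¹ * I ≤ C * W ^ (-(q / p)) := by
      rw [mul_assoc]
      exact mul_le_mul_of_nonneg_left hWI hC.le
    calc K2 ≤ (C * W ^ (-(q / p))) ^ (2 / q) :=
          Real.rpow_le_rpow hK0 hK (by positivity)
      _ = C ^ (2 / q) * W ^ (-(2 / p)) := by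
          rw [Real.mul_rpow hC.le (Real.rpow_nonneg hW0 _),
            ← Real.rpow_mul hW0]
          congr 2
          field_simp
  have hcalc : c ^ 2 * (V * (C ^ (2 / q) * W ^ (-(2 / p)))) = V ^ (1 - 2 / p) := by
    have e1 : (C ^ (-(1 / q))) ^ 2 = C ^ (-(2 / q)) := by
      rw [← Real.rpow_natCast (C ^ (-(1 / q))) 2, ← Real.rpow_mul hC.le]
      congr 1; push_cast; ring
    have e2 : (V ^ (-(1 / p))) ^ 2 = V ^ (-(2 / p)) := by
      rw [← Real.rpow_natCast (V ^ (-(1 / p))) 2, ← Real.rpow_mul hvolpos.le]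
      congr 1; push_cast; ring
    have e3 : (W ^ ((1:ℝ) / p)) ^ 2 = W ^ ((2:ℝ) / p) := by
      rw [← Real.rpow_natCast (W ^ ((1:ℝ) / p)) 2, ← Real.rpow_mul hW0]
      congr 1; push_cast; ring
    have hCC : C ^ (-(2 / q)) * C ^ ((2:ℝ) / q) = 1 := by
      rw [← Real.rpow_add hC]; norm_num
    have hWW : W ^ ((2:ℝ) / p) * W ^ (-(2 / p)) = 1 := by
      rw [← Real.rpow_add hWpos]; norm_num
    have hVV : V ^ (-(2 / p)) * V = V ^ (1 - 2 / p) := by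
      nth_rewrite 2 [← Real.rpow_one V]
      rw [← Real.rpow_add hvolpos]
      congr 1; ring
    calc c ^ 2 * (V * (C ^ (2 / q) * W ^ (-(2 / p))))
        = (C ^ (-(2 / q)) * C ^ ((2:ℝ) / q)) * (W ^ ((2:ℝ) / p) * W ^ (-(2 / p)))
            * (V ^ (-(2 / p)) * V) := by
          rw [hc, mul_pow, mul_pow, e1, e2, e3]; ring
      _ = V ^ (1 - 2 / p) := by rw [hCC, hWW, hVV, one_mul, one_mul]
  have hmain : c ^ 2 * ∫ x, f x ^ 2 ≤ V ^ (1 - 2 / p) := by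
    calc c ^ 2 * ∫ x, f x ^ 2 ≤ c ^ 2 * (V * K2) :=
          mul_le_mul_of_nonneg_left hf2val (sq_nonneg c)
      _ ≤ c ^ 2 * (V * (C ^ (2 / q) * W ^ (-(2 / p)))) := by
          refine mul_le_mul_of_nonneg_left ?_ (sq_nonneg c)
          exact mul_le_mul_of_nonneg_left h6 hvolpos.le
      _ = V ^ (1 - 2 / p) := hcalc
  refine ⟨hσ, hsupp', ?_, ?_, hmom'⟩
  · have hfL2 : MemLp f 2 volume :=
      (memLp_two_iff_integrable_sq hfint.aestronglyMeasurable).2 hf2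
    exact hfL2.const_mul c
  · have hpt : ∀ x, |c * f x| ^ (2:ℝ) = c ^ 2 * f x ^ 2 := fun x => by
      rw [Real.rpow_two, sq_abs, mul_pow]
    have hInt2 : ∫ x, |c * f x| ^ (2:ℝ) = c ^ 2 * ∫ x, f x ^ 2 := by
      simp_rw [hpt]
      rw [integral_const_mul]
    calc (∫ x, |c * f x| ^ (2:ℝ)) ^ ((1:ℝ) / 2)
        = (c ^ 2 * ∫ x, f x ^ 2) ^ ((1:ℝ) / 2) := by rw [hInt2]
      _ ≤ (V ^ (1 - 2 / p)) ^ ((1:ℝ) / 2) := by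
          refine Real.rpow_le_rpow ?_ hmain (by norm_num)
          exact mul_nonneg (sq_nonneg c) (integral_nonneg fun x => sq_nonneg _)
      _ = V ^ ((1:ℝ) / 2 - 1 / p) := by
          rw [← Real.rpow_mul hvolpos.le]
          congr 1; ring
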